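/- For m ≥ 2, f_m(x) := ∫_0^1 G(x - t) dt, where G(x) = (sign(x)/2)((e^x - e^{-x})/2 - Σ_{k=1}^{m-1} x^{2k-1}/(2k-1)!), satisfies for all x ∈ [0,1]: f_m(x) = (e^x + e^{-x} + e^{1-x} + e^{x-1} - 4)/4 - Σ_{k=1}^{m-1} (x^{2k} + (1-x)^{2k})/(2·(2k)!). -/

import Mathlib

open Real Finset intervalIntegral

/-- For `m ≥ 2`, `f_m(x) = ∫_0^1 G(x - t) dt` with
`G(x) = (sign x / 2)((eˣ - e⁻ˣ)/2 - ∑_{k=1}^{m-1} x^{2k-1}/(2k-1)!)` has the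
explicit value stated for all `x ∈ [0,1]`. -/
theorem stmt_2 (m : ℕ) (hm : 2 ≤ m)
    (G : ℝ → ℝ)
    (hG : ∀ x : ℝ, G x =
      (Real.sign x / 2) * ((Real.exp x - Real.exp (-x)) / 2 -
        ∑ k ∈ Finset.Icc 1 (m-1), x ^ (2*k - 1) / (Nat.factorial (2*k - 1)))) :
    ∀ x ∈ Set.Icc (0:ℝ) 1,
      (∫ t in (0:ℝ)..1, G (x - t)) =
        (Real.exp x + Real.exp (-x) + Real.exp (1 - x) + Real.exp (x - 1) - 4) / 4 -
          ∑ k ∈ Finset.Icc 1 (m-1),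
            (x ^ (2*k) + (1 - x) ^ (2*k)) / (2 * Nat.factorial (2*k)) := by
  intro x hx
  obtain ⟨hx0, hx1⟩ := hx
  set H : ℝ → ℝ := fun y => (1/2) * ((Real.exp y - Real.exp (-y)) / 2 -
      ∑ k ∈ Finset.Icc 1 (m-1), y ^ (2*k - 1) / (Nat.factorial (2*k - 1))) with hHdef
  set F : ℝ → ℝ := fun y => (1/2) * ((Real.exp y + Real.exp (-y) - 2) / 2 -
      ∑ k ∈ Finset.Icc 1 (m-1), y ^ (2*k) / (Nat.factorial (2*k))) with hFdef
  have hHcont : Continuous H := by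
    apply Continuous.mul continuous_const
    apply Continuous.sub
    · fun_prop
    · exact continuous_finset_sum _ fun k _ => by fun_prop
  have hF0 : F 0 = 0 := by
    simp only [hFdef]
    rw [Finset.sum_eq_zero, Real.exp_zero]
    · norm_num
    · intro k hk
      rw [Finset.mem_Icc] at hk
      have : 2 * k ≠ 0 := by omega
      simp [zero_pow this]
  -- derivative of F is H
  have hF' : ∀ y : ℝ, HasDerivAt F (H y) y := by
    intro y
    have h1 : HasDerivAt (fun y : ℝ => (Real.exp y + Real.exp (-y) - 2) / 2)
        ((Real.exp y - Real.exp (-y)) / 2) y := by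
      have he : HasDerivAt (fun y : ℝ => Real.exp (-y)) (-Real.exp (-y)) y := by
        have := (Real.hasDerivAt_exp (-y)).comp y (hasDerivAt_neg y)
        simp at this
        exact this
      simpa [sub_eq_add_neg] using
        (((Real.hasDerivAt_exp y).add he).sub_const 2).div_const 2
    have h2 : HasDerivAt (fun y : ℝ => ∑ k ∈ Finset.Icc 1 (m-1),
          y ^ (2*k) / (Nat.factorial (2*k) : ℝ))
        (∑ k ∈ Finset.Icc 1 (m-1), y ^ (2*k - 1) / (Nat.factorial (2*k - 1) : ℝ)) y := by
      apply HasDerivAt.fun_sum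
      intro k hk
      rw [Finset.mem_Icc] at hk
      have hk1 : 1 ≤ k := hk.1
      have hfac : (Nat.factorial (2*k) : ℝ) = (2*k : ℕ) * Nat.factorial (2*k - 1) := by
        have : 2 * k = (2 * k - 1) + 1 := by omega
        rw [this, Nat.factorial_succ]
        push_cast
        try ring
      have hd := (hasDerivAt_pow (2*k) y).div_const (Nat.factorial (2*k) : ℝ)
      refine hd.congr_deriv ?_
      rw [hfac]
      have hne : ((2*k : ℕ) : ℝ) ≠ 0 := by positivity
      have hfne : (Nat.factorial (2*k - 1) : ℝ) ≠ 0 := by positivity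
      push_cast
      field_simp
    exact (h1.sub h2).const_mul (1/2 : ℝ)
  -- G equals H on nonnegatives and -H on nonpositives
  have hGpos : ∀ s : ℝ, 0 ≤ s → G s = H s := by
    intro s hs
    rcases eq_or_lt_of_le hs with h | h
    · rw [hG, ← h, Real.sign_zero, hHdef]
      simp only [zero_div, zero_mul]
      rw [Finset.sum_eq_zero, Real.exp_zero]
      · norm_num
      · intro k hk
        rw [Finset.mem_Icc] at hk
        have : 2 * k - 1 ≠ 0 := by omega
        simp [zero_pow this]
    · rw [hG, Real.sign_of_pos h]
  have hGneg : ∀ s : ℝ, s ≤ 0 → G s = -H s := by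
    intro s hs
    rcases eq_or_lt_of_le hs with h | h
    · rw [hG, h, Real.sign_zero, hHdef]
      simp only [zero_div, zero_mul]
      rw [Finset.sum_eq_zero, Real.exp_zero]
      · norm_num
      · intro k hk
        rw [Finset.mem_Icc] at hk
        have : 2 * k - 1 ≠ 0 := by omega
        simp [zero_pow this]
    · rw [hG, Real.sign_of_neg h, hHdef]
      ring
  -- change of variables
  rw [intervalIntegral.integral_comp_sub_left G x]
  have hx0' : x - 1 ≤ 0 := by linarith
  -- split the integral at 0
  have hint1 : IntervalIntegrable G MeasureTheory.volume (x - 1) 0 := by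
    apply (hHcont.neg.intervalIntegrable (x-1) 0).congr
    intro s hs
    have : s ≤ 0 := by
      rw [Set.uIoc_of_le hx0'] at hs
      exact hs.2
    exact (hGneg s this).symm
  have hint2 : IntervalIntegrable G MeasureTheory.volume 0 x := by
    apply (hHcont.intervalIntegrable 0 x).congr
    intro s hs
    have : 0 ≤ s := by
      rw [Set.uIoc_of_le hx0] at hs
      exact le_of_lt hs.1
    exact (hGpos s this).symm
  have hsplit : (∫ s in (x-1)..(x-0), G s) = (∫ s in (x-1)..0, G s) + ∫ s in (0:ℝ)..x, G s := by
    rw [sub_zero]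
    exact (intervalIntegral.integral_add_adjacent_intervals hint1 hint2).symm
  rw [hsplit]
  have hI2 : (∫ s in (0:ℝ)..x, G s) = F x := by
    rw [intervalIntegral.integral_congr (g := H) ?_,
      intervalIntegral.integral_eq_sub_of_hasDerivAt (fun y _ => hF' y)
        (hHcont.intervalIntegrable 0 x), hF0, sub_zero]
    intro s hs
    rw [Set.uIcc_of_le hx0] at hs
    exact hGpos s hs.1
  have hI1 : (∫ s in (x-1)..0, G s) = F (x - 1) := by
    rw [intervalIntegral.integral_congr (g := fun s => -H s) ?_]
    · rw [intervalIntegral.integral_neg,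
        intervalIntegral.integral_eq_sub_of_hasDerivAt (fun y _ => hF' y)
          (hHcont.intervalIntegrable (x-1) 0), hF0]
      ring
    · intro s hs
      rw [Set.uIcc_of_le hx0'] at hs
      exact hGneg s hs.2
  rw [hI1, hI2]
  -- final algebraic identity
  have hFeven : F (x - 1) = F (1 - x) := by
    have h : x - 1 = -(1 - x) := by ring
    simp only [hFdef, h, neg_neg]
    rw [Finset.sum_congr rfl (fun k _ => by rw [Even.neg_pow (even_two_mul k)] :
      ∀ k ∈ Finset.Icc 1 (m-1), (-(1-x)) ^ (2*k) / ((Nat.factorial (2*k)):ℝ) =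
        (1-x) ^ (2*k) / ((Nat.factorial (2*k)):ℝ))]
    ring
  rw [hFeven]
  have hsum : ∑ k ∈ Finset.Icc 1 (m-1),
      (x ^ (2*k) + (1 - x) ^ (2*k)) / (2 * (Nat.factorial (2*k) : ℝ)) =
      ((∑ k ∈ Finset.Icc 1 (m-1), x ^ (2*k) / (Nat.factorial (2*k) : ℝ)) +
       ∑ k ∈ Finset.Icc 1 (m-1), (1-x) ^ (2*k) / (Nat.factorial (2*k) : ℝ)) / 2 := by
    rw [← Finset.sum_add_distrib, Finset.sum_div]
    exact Finset.sum_congr rfl fun k _ => by ring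
  rw [hsum]
  simp only [hFdef]
  rw [neg_sub (1:ℝ) x]
  ring
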